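/- For an array A[1..n] with no consecutive equal elements and any i in {1,...,n-1}: if Min(A) is the relevant tree of node i (i.e., node i is internal in Min(A)), then f(i+1, Min(A)) = f(i, Min(A)) + 1 and f(i+1, Max(A)) = f(i, Max(A)) + k for some k > 1; otherwise f(i+1, Max(A)) = f(i, Max(A)) + 1 and f(i+1, Min(A)) = f(i, Min(A)) + k for some k > 1. -/

import Mathlib

def psv (A : ℕ → ℤ) (i : ℕ) : ℕ := Nat.findGreatest (fun j => A j < A i) (i - 1)

def plv (A : ℕ → ℤ) (i : ℕ) : ℕ := Nat.findGreatest (fun j => A i < A j) (i - 1)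

def internalMin (A : ℕ → ℤ) (n i : ℕ) : Prop := ∃ j, 1 ≤ j ∧ j ≤ n ∧ psv A j = i

def internalMax (A : ℕ → ℤ) (n i : ℕ) : Prop := ∃ j, 1 ≤ j ∧ j ≤ n ∧ plv A j = i

def leafMin (A : ℕ → ℤ) (n i : ℕ) : Prop := ¬ internalMin A n i

def leafMax (A : ℕ → ℤ) (n i : ℕ) : Prop := ¬ internalMax A n i

def NoConsecEq (A : ℕ → ℤ) (n : ℕ) : Prop := ∀ i, 1 ≤ i → i < n → A i ≠ A (i + 1)

def isLeftmostChildMin (A : ℕ → ℤ) (n c : ℕ) : Prop :=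
  1 ≤ c ∧ c ≤ n ∧ ∀ j, 1 ≤ j → j ≤ n → psv A j = psv A c → c ≤ j

def isLeftmostChildMax (A : ℕ → ℤ) (n c : ℕ) : Prop :=
  1 ≤ c ∧ c ≤ n ∧ ∀ j, 1 ≤ j → j ≤ n → plv A j = plv A c → c ≤ j

def immLeftSibMin (A : ℕ → ℤ) (n j i : ℕ) : Prop :=
  1 ≤ j ∧ j < i ∧ i ≤ n ∧ psv A j = psv A i ∧ ∀ k, j < k → k < i → psv A k ≠ psv A i

def immLeftSibMax (A : ℕ → ℤ) (n j i : ℕ) : Prop :=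
  1 ≤ j ∧ j < i ∧ i ≤ n ∧ plv A j = plv A i ∧ ∀ k, j < k → k < i → plv A k ≠ plv A i

def redMin (A : ℕ → ℤ) (n i : ℕ) : Prop := ∃ j, immLeftSibMin A n j i ∧ A j ≠ A i

def redMax (A : ℕ → ℤ) (n i : ℕ) : Prop := ∃ j, immLeftSibMax A n j i ∧ A j ≠ A i

def validMin (A : ℕ → ℤ) (n i : ℕ) : Prop :=
  1 ≤ i ∧ i ≤ n ∧ ¬ isLeftmostChildMin A n i ∧ ¬ ∃ j, immLeftSibMin A n j i ∧ leafMin A n j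

def validMax (A : ℕ → ℤ) (n i : ℕ) : Prop :=
  1 ≤ i ∧ i ≤ n ∧ ¬ isLeftmostChildMax A n i ∧ ¬ ∃ j, immLeftSibMax A n j i ∧ leafMax A n j

inductive LTree where
  | node : ℕ → List LTree → LTree

mutual
def bpt : LTree → List (Bool × ℕ)
  | .node l cs => (false, l) :: bptL cs ++ [(true, l)]
def bptL : List LTree → List (Bool × ℕ)
  | [] => []
  | t :: ts => bpt t ++ bptL ts
end

def bpSeq (t : LTree) : List Bool := (bpt t).map Prod.fst

def fpos (t : LTree) (i : ℕ) : ℕ := (bpt t).idxOf (false, i) + 1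

def childList (P : ℕ → ℕ) (n i : ℕ) : List ℕ :=
  (List.range (n + 1)).filter (fun j => decide (1 ≤ j ∧ P j = i ∧ i < j))

def buildTree (P : ℕ → ℕ) (n : ℕ) : ℕ → ℕ → LTree
  | 0, i => .node i []
  | fuel + 1, i => .node i ((childList P n i).map (buildTree P n fuel))

def minTree (A : ℕ → ℤ) (n : ℕ) : LTree := buildTree (psv A) n (n + 1) 0

def maxTree (A : ℕ → ℤ) (n : ℕ) : LTree := buildTree (plv A) n (n + 1) 0


namespace Stmt5Aux

abbrev cl (x : ℕ) : Bool × ℕ := (true, x)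

def cchF (P : ℕ → ℕ) : ℕ → ℕ → ℕ → List ℕ
  | 0, _, _ => []
  | f+1, j, K => if j < K then [] else j :: (if j = 0 then [] else cchF P f (P j) K)

def cch (P : ℕ → ℕ) (j K : ℕ) : List ℕ := cchF P (j+1) j K

def nxt (P : ℕ → ℕ) (n j : ℕ) : ℕ := if j < n then P (j+1) + 1 else 0

def seg (P : ℕ → ℕ) (n j : ℕ) : List (Bool × ℕ) :=
  (false, j) :: (cch P j (nxt P n j)).map cl

def segcat (P : ℕ → ℕ) (n a b : ℕ) : List (Bool × ℕ) :=
  ((List.range' a (b - a)).map (seg P n)).flatten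

inductive Anc (P : ℕ → ℕ) (n : ℕ) : ℕ → ℕ → Prop
  | refl (j : ℕ) : Anc P n j j
  | step {k j : ℕ} : 1 ≤ j → j ≤ n → Anc P n k (P j) → Anc P n k j

noncomputable def subEnd (P : ℕ → ℕ) (n i : ℕ) : ℕ :=
  @Nat.find (fun j => i < j ∧ ¬(j ≤ n ∧ Anc P n i j)) (Classical.decPred _)
    ⟨i + n + 1, by omega, fun hc => by omega⟩

section Basic

variable {P : ℕ → ℕ} {n : ℕ}

lemma subEnd_spec (P : ℕ → ℕ) (n i : ℕ) :
    i < subEnd P n i ∧ ¬(subEnd P n i ≤ n ∧ Anc P n i (subEnd P n i)) := by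
  exact @Nat.find_spec (fun j => i < j ∧ ¬(j ≤ n ∧ Anc P n i j)) (Classical.decPred _)
    ⟨i + n + 1, by omega, fun hc => by omega⟩

lemma subEnd_min' {i m : ℕ} (h : i < m ∧ ¬(m ≤ n ∧ Anc P n i m)) :
    subEnd P n i ≤ m := by
  exact @Nat.find_min' (fun j => i < j ∧ ¬(j ≤ n ∧ Anc P n i j)) (Classical.decPred _)
    ⟨i + n + 1, by omega, fun hc => by omega⟩ _ h

lemma not_spec_of_lt_subEnd {i m : ℕ} (h : m < subEnd P n i) :
    ¬(i < m ∧ ¬(m ≤ n ∧ Anc P n i m)) := by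
  exact @Nat.find_min (fun j => i < j ∧ ¬(j ≤ n ∧ Anc P n i j)) (Classical.decPred _)
    ⟨i + n + 1, by omega, fun hc => by omega⟩ _ h

variable (H1 : ∀ j, 1 ≤ j → j ≤ n → P j < j)
variable (H2 : ∀ j, j + 1 ≤ n → Anc P n (P (j+1)) j)

include H1 in
lemma anc_le {k j : ℕ} (h : Anc P n k j) : k ≤ j := by
  induction h with
  | refl => exact le_rfl
  | step hj hjn _ ih => have := H1 _ hj hjn; omega

lemma anc_trans {a b c : ℕ} (h1 : Anc P n a b) (h2 : Anc P n b c) : Anc P n a c := by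
  induction h2 with
  | refl => exact h1
  | step hj hjn _ ih => exact Anc.step hj hjn ih

include H1 in
lemma anc_zero : ∀ j, j ≤ n → Anc P n 0 j := by
  intro j
  induction j using Nat.strong_induction_on with
  | _ j ih =>
    intro hj
    rcases Nat.eq_zero_or_pos j with rfl | hpos
    · exact Anc.refl 0
    · have hPj := H1 j hpos hj
      exact Anc.step hpos hj (ih _ hPj (by omega))

lemma anc_cases {a b : ℕ} (h : Anc P n a b) :
    a = b ∨ (1 ≤ b ∧ b ≤ n ∧ Anc P n a (P b)) := by
  cases h with
  | refl => exact Or.inl rfl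
  | step h1 h2 h3 => exact Or.inr ⟨h1, h2, h3⟩

lemma anc_total {a b j : ℕ} (ha : Anc P n a j) (hb : Anc P n b j) :
    Anc P n a b ∨ Anc P n b a := by
  induction ha with
  | refl => exact Or.inr hb
  | step hj hjn h ih =>
    cases hb with
    | refl => exact Or.inl (Anc.step hj hjn h)
    | step _ _ hb' => exact ih hb'

include H2 in
lemma anc_pred {i j : ℕ} (h : Anc P n i j) (hij : i < j) : Anc P n i (j - 1) := by
  cases h with
  | refl => omega
  | step hj hjn h' =>
    have h2 := H2 (j - 1) (by omega)
    rw [show j - 1 + 1 = j by omega] at h2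
    exact anc_trans h' h2

include H1 H2 in
lemma anc_down {i m : ℕ} : ∀ j, Anc P n i j → i ≤ m → m ≤ j → Anc P n i m := by
  intro j
  induction j using Nat.strong_induction_on with
  | _ j ih =>
    intro h him hmj
    rcases eq_or_lt_of_le hmj with rfl | hlt
    · exact h
    · have hij : i < j := by omega
      have h' := anc_pred H2 h hij
      exact ih (j - 1) (by omega) h' him (by omega)

include H1 H2 in
lemma mem_iff {i j : ℕ} (hi : i ≤ n) (hj : j ≤ n) :
    Anc P n i j ↔ i ≤ j ∧ j < subEnd P n i := by
  constructor
  · intro h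
    refine ⟨anc_le H1 h, ?_⟩
    by_contra hE
    push_neg at hE
    have hspec := subEnd_spec P n i
    have hancE : Anc P n i (subEnd P n i) :=
      anc_down H1 H2 j h (by omega) hE
    exact hspec.2 ⟨by omega, hancE⟩
  · rintro ⟨hij, hjE⟩
    rcases eq_or_lt_of_le hij with rfl | hlt
    · exact Anc.refl i
    · have := not_spec_of_lt_subEnd (P := P) (n := n) hjE
      push_neg at this
      exact (this hlt).2

lemma subEnd_le (hi : i ≤ n) : subEnd P n i ≤ n + 1 :=
  subEnd_min' ⟨by omega, fun hc => by omega⟩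

include H1 in
lemma subEnd_zero : subEnd P n 0 = n + 1 := by
  have h1 : subEnd P n 0 ≤ n + 1 := subEnd_le (by omega)
  rcases eq_or_lt_of_le h1 with h | h
  · exact h
  · exfalso
    have hspec := subEnd_spec P n 0
    exact hspec.2 ⟨by omega, anc_zero H1 _ (by omega)⟩

lemma mem_childList {i c : ℕ} :
    c ∈ childList P n i ↔ (c ≤ n ∧ 1 ≤ c ∧ P c = i ∧ i < c) := by
  simp only [childList, List.mem_filter, List.mem_range, decide_eq_true_eq]
  constructor <;> rintro ⟨a1, a2, a3, a4⟩ <;> exact ⟨by omega, a2, a3, a4⟩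

lemma child_anc {i c : ℕ} (h1 : 1 ≤ c) (h2 : c ≤ n) (h3 : P c = i) : Anc P n i c :=
  Anc.step h1 h2 (by rw [h3]; exact Anc.refl i)

end Basic

section Struct

variable {P : ℕ → ℕ} {n : ℕ}
variable (H1 : ∀ j, 1 ≤ j → j ≤ n → P j < j)
variable (H2 : ∀ j, j + 1 ≤ n → Anc P n (P (j+1)) j)

include H1 H2 in
lemma no_child_subEnd {i : ℕ} (hi : i ≤ n) (hnc : childList P n i = []) :
    subEnd P n i = i + 1 := by
  have hgt := (subEnd_spec P n i).1
  have hle : subEnd P n i ≤ i + 1 := by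
    apply subEnd_min'
    refine ⟨by omega, ?_⟩
    rintro ⟨h1n, ha⟩
    cases ha with
    | step hj hjn h' =>
      have hle1 : i ≤ P (i+1) := anc_le H1 h'
      have hle2 : P (i+1) ≤ i := anc_le H1 (H2 i h1n)
      have hPi : P (i+1) = i := by omega
      have : (i+1) ∈ childList P n i := mem_childList.mpr ⟨h1n, by omega, hPi, by omega⟩
      rw [hnc] at this
      exact absurd this List.not_mem_nil
  omega

include H1 H2 in
lemma child_first {i : ℕ} (hi : i ≤ n) (hne : childList P n i ≠ []) :
    P (i+1) = i ∧ i + 1 ≤ n := by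
  obtain ⟨c, hc⟩ := List.exists_mem_of_ne_nil _ hne
  obtain ⟨hcn, hc1, hPc, hic⟩ := mem_childList.mp hc
  have hanc : Anc P n i c := child_anc hc1 hcn hPc
  have hcE : c < subEnd P n i := ((mem_iff H1 H2 hi hcn).mp hanc).2
  have h1n : i + 1 ≤ n := by omega
  have hanc1 : Anc P n i (i+1) := (mem_iff H1 H2 hi h1n).mpr ⟨by omega, by omega⟩
  cases hanc1 with
  | step hj hjn h' =>
    have hle1 : i ≤ P (i+1) := anc_le H1 h'
    have hle2 : P (i+1) ≤ i := anc_le H1 (H2 i h1n)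
    exact ⟨by omega, h1n⟩

include H1 H2 in
lemma subEnd_P_anc {i : ℕ} (hi : i ≤ n) (he : subEnd P n i ≤ n) :
    Anc P n (P (subEnd P n i)) i ∧ P (subEnd P n i) ≠ i := by
  set e := subEnd P n i with hedef
  have hgt := (subEnd_spec P n i).1
  have hnot := (subEnd_spec P n i).2
  have hnotanc : ¬ Anc P n i e := fun hc => hnot ⟨he, hc⟩
  have hanc1 : Anc P n i (e - 1) := (mem_iff H1 H2 hi (by omega)).mpr ⟨by omega, by omega⟩
  have hanc2 : Anc P n (P e) (e - 1) := by
    have := H2 (e - 1) (by omega)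
    rwa [show e - 1 + 1 = e by omega] at this
  have htot := anc_total hanc1 hanc2
  have hPeI : Anc P n (P e) i := by
    rcases htot with h | h
    · exact absurd (Anc.step (by omega) he h) hnotanc
    · exact h
  refine ⟨hPeI, ?_⟩
  intro hc
  apply hnotanc
  exact Anc.step (by omega) he (by rw [hc]; exact Anc.refl i)

include H1 in
lemma cchF_stable {K : ℕ} : ∀ j, j ≤ n → ∀ f, j + 1 ≤ f → cchF P f j K = cchF P (j+1) j K := by
  intro j
  induction j using Nat.strong_induction_on with
  | _ j ih =>
    intro hj f hf
    obtain ⟨f', rfl⟩ : ∃ f', f = f' + 1 := ⟨f - 1, by omega⟩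
    show cchF P (f'+1) j K = cchF P (j+1) j K
    simp only [cchF]
    split
    · rfl
    · congr 1
      split
      · rfl
      · rename_i hK h0
        have hPj : P j < j := H1 j (by omega) hj
        rw [ih (P j) hPj (by omega) f' (by omega), ih (P j) hPj (by omega) j (by omega)]

include H1 in
lemma cch_cons {j K : ℕ} (hj : j ≤ n) (hK : K ≤ j) :
    cch P j K = j :: (if j = 0 then [] else cch P (P j) K) := by
  show cchF P (j+1) j K = _
  simp only [cchF]
  rw [if_neg (by omega)]
  congr 1
  split
  · rfl
  · rename_i h0
    have hPj : P j < j := H1 j (by omega) hj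
    exact cchF_stable H1 (P j) (by omega) j (by omega)

lemma cch_nil {j K : ℕ} (hK : j < K) : cch P j K = [] := by
  show cchF P (j+1) j K = _
  simp only [cchF]
  rw [if_pos hK]

lemma segcat_append {a b c : ℕ} (hab : a ≤ b) (hbc : b ≤ c) :
    segcat P n a b ++ segcat P n b c = segcat P n a c := by
  have h := List.range'_append (s := a) (m := b - a) (n := c - b) (step := 1)
  rw [one_mul, show a + (b - a) = b by omega, show b - a + (c - b) = c - a by omega] at h
  simp only [segcat, ← h, List.map_append, List.flatten_append]

lemma segcat_cons {a b : ℕ} (hab : a < b) :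
    segcat P n a b = seg P n a ++ segcat P n (a+1) b := by
  simp only [segcat]
  rw [show b - a = (b - (a+1)) + 1 by omega, List.range'_succ]
  simp

lemma segcat_nil {a b : ℕ} (hab : b ≤ a) : segcat P n a b = [] := by
  simp only [segcat, show b - a = 0 by omega]
  simp

lemma mem_seg {x : Bool × ℕ} {j : ℕ} (h : x ∈ seg P n j) : x = (false, j) ∨ x.1 = true := by
  simp only [seg, List.mem_cons, List.mem_map] at h
  rcases h with h | ⟨y, _, rfl⟩
  · exact Or.inl h
  · exact Or.inr rfl

lemma mem_segcat {x : Bool × ℕ} {a b : ℕ} (h : x ∈ segcat P n a b) :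
    x.1 = true ∨ (a ≤ x.2 ∧ x.2 < b) := by
  simp only [segcat, List.mem_flatten, List.mem_map] at h
  obtain ⟨l, ⟨j, hj, rfl⟩, hx⟩ := h
  rw [List.mem_range'_1] at hj
  rcases mem_seg hx with rfl | h
  · exact Or.inr ⟨by simpa using hj.1, by have := hj.2; simp; omega⟩
  · exact Or.inl h

lemma bptL_eq : ∀ ts : List LTree, bptL ts = (ts.map bpt).flatten := by
  intro ts
  induction ts with
  | nil => simp [bptL]
  | cons t ts ih => simp [bptL, ih]

lemma filter_single {l : List ℕ} {p : ℕ → Bool} {c : ℕ} (hnd : l.Nodup) (hc : c ∈ l)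
    (hpc : p c = true) (hall : ∀ d ∈ l, p d = true → d = c) : l.filter p = [c] := by
  induction l with
  | nil => exact absurd hc List.not_mem_nil
  | cons a t ih =>
    rw [List.nodup_cons] at hnd
    rcases List.mem_cons.mp hc with rfl | hct
    · rw [List.filter_cons_of_pos hpc]
      congr 1
      rw [List.filter_eq_nil_iff]
      intro d hd hpd
      exact hnd.1 ((hall d (List.mem_cons_of_mem _ hd) hpd) ▸ hd)
    · have hpa : p a = false := by
        by_contra hp
        have : a = c := hall a List.mem_cons_self (by simpa using hp)
        exact hnd.1 (this ▸ hct)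
      rw [List.filter_cons_of_neg (by simp [hpa])]
      exact ih hnd.2 hct (fun d hd => hall d (List.mem_cons_of_mem _ hd))

lemma filter_split {l : List ℕ} {c b : ℕ} (hs : l.Pairwise (· < ·)) (hc : c ∈ l)
    (hcb : c < b) (hall : ∀ d ∈ l, c < d → b ≤ d) :
    l.filter (fun d => decide (c ≤ d)) = c :: l.filter (fun d => decide (b ≤ d)) := by
  induction l with
  | nil => exact absurd hc List.not_mem_nil
  | cons a t ih =>
    rw [List.pairwise_cons] at hs
    rcases List.mem_cons.mp hc with rfl | hct
    · rw [List.filter_cons_of_pos (by simp), List.filter_cons_of_neg (by simp; omega)]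
      congr 1
      have h1 : List.filter (fun d => decide (c ≤ d)) t = t :=
        List.filter_eq_self.mpr (fun d hd => by simp; have := hs.1 d hd; omega)
      have h2 : List.filter (fun d => decide (b ≤ d)) t = t :=
        List.filter_eq_self.mpr (fun d hd => by
          simp; exact hall d (List.mem_cons_of_mem _ hd) (hs.1 d hd))
      rw [h1, h2]
    · have hac : a < c := by
        have := hs.1 c hct
        omega
      rw [List.filter_cons_of_neg (by simp; omega), List.filter_cons_of_neg (by simp; omega)]
      exact ih hs.2 hct (fun d hd => hall d (List.mem_cons_of_mem _ hd))

lemma childList_nodup {i : ℕ} : (childList P n i).Nodup :=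
  List.nodup_range.filter _

lemma childList_sorted {i : ℕ} : (childList P n i).Pairwise (· < ·) :=
  List.pairwise_lt_range.filter _

end Struct

section Main

variable {P : ℕ → ℕ} {n : ℕ}
variable (H1 : ∀ j, 1 ≤ j → j ≤ n → P j < j)
variable (H2 : ∀ j, j + 1 ≤ n → Anc P n (P (j+1)) j)

include H1 H2 in
lemma main_ind : ∀ d i, i ≤ n → n + 1 - i ≤ d →
    (∀ F, n + 1 - i ≤ F →
      segcat P n i (subEnd P n i) =
        bpt (buildTree P n F i) ++
          (if i = 0 then [] else (cch P (P i) (nxt P n (subEnd P n i - 1))).map cl)) ∧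
    (∀ F, 1 ≤ i → n + 1 - i ≤ F → ∀ p, P i = p → p < i →
      segcat P n i (subEnd P n p) =
        (((childList P n p).filter (fun d => decide (i ≤ d))).map
          (fun x => bpt (buildTree P n F x))).flatten ++
          (cch P p (nxt P n (subEnd P n p - 1))).map cl) := by
  intro d
  induction d with
  | zero => intro i hi hd; omega
  | succ d ih =>
    intro i hi hd
    have hmain : ∀ F, n + 1 - i ≤ F →
        segcat P n i (subEnd P n i) =
          bpt (buildTree P n F i) ++
            (if i = 0 then [] else (cch P (P i) (nxt P n (subEnd P n i - 1))).map cl) := by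
      intro F hF
      obtain ⟨F', rfl⟩ : ∃ F', F = F' + 1 := ⟨F - 1, by omega⟩
      by_cases hch : childList P n i = []
      · -- leaf case
        have hE : subEnd P n i = i + 1 := no_child_subEnd H1 H2 hi hch
        have hbuild : bpt (buildTree P n (F' + 1) i) = [(false, i), (true, i)] := by
          show bpt (.node i ((childList P n i).map _)) = _
          rw [hch]
          simp [bpt, bptL]
        rw [hE, segcat_cons (by omega), segcat_nil (le_refl _), hbuild]
        rcases Nat.eq_zero_or_pos i with rfl | hpos
        · have hn0 : n = 0 := by
            by_contra hn
            have hp1 : P 1 = 0 := by have := H1 1 (by omega) (by omega); omega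
            have : 1 ∈ childList P n 0 := mem_childList.mpr ⟨by omega, by omega, hp1, by omega⟩
            rw [hch] at this
            exact absurd this List.not_mem_nil
          subst hn0
          simp [seg, nxt, cch, cchF, cl]
        · have hnxt : nxt P n i ≤ i := by
            unfold nxt
            split
            · rename_i hin
              have hne : P (i + 1) ≠ i := by
                intro hc
                have : i + 1 ∈ childList P n i :=
                  mem_childList.mpr ⟨by omega, by omega, hc, by omega⟩
                rw [hch] at this
                exact absurd this List.not_mem_nil
              have := H1 (i + 1) (by omega) (by omega)
              omega
            · omega
          rw [show i + 1 - 1 = i from rfl, if_neg (by omega)]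
          rw [seg, cch_cons H1 hi hnxt, if_neg (by omega)]
          simp [cl]
      · -- internal case
        obtain ⟨hP1, h1n⟩ := child_first H1 H2 hi hch
        have hanc1 : Anc P n i (i + 1) := child_anc (by omega) h1n hP1
        have hE1 : i + 1 < subEnd P n i := ((mem_iff H1 H2 hi h1n).mp hanc1).2
        have hW := (ih (i + 1) h1n (by omega)).2 F' (by omega) (by omega) i hP1 (by omega)
        have hfilter : (childList P n i).filter (fun d => decide (i + 1 ≤ d)) = childList P n i :=
          List.filter_eq_self.mpr (fun d hd => by
            have := (mem_childList.mp hd).2.2.2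
            simp
            omega)
        rw [hfilter] at hW
        have hseg : seg P n i = [(false, i)] := by
          rw [seg, show nxt P n i = i + 1 by rw [nxt, if_pos (by omega), hP1],
            cch_nil (by omega)]
          rfl
        rw [segcat_cons (show i < subEnd P n i by omega), hseg, hW]
        have hbuild : bpt (buildTree P n (F' + 1) i) =
            (false, i) :: (((childList P n i).map (fun x => bpt (buildTree P n F' x))).flatten
              ++ [(true, i)]) := by
          show bpt (.node i _) = _
          simp only [bpt, bptL_eq, List.map_map]
          rfl
        rw [hbuild]
        have hkey : (cch P i (nxt P n (subEnd P n i - 1))).map cl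
            = (true, i) :: (if i = 0 then []
                else (cch P (P i) (nxt P n (subEnd P n i - 1))).map cl) := by
          rcases Nat.eq_zero_or_pos i with rfl | hpos
          · rw [if_pos rfl, subEnd_zero H1]
            simp [nxt, cch, cchF, cl]
          · have hEn1 : subEnd P n i ≤ n + 1 := subEnd_le hi
            have hKle : nxt P n (subEnd P n i - 1) ≤ i := by
              rcases eq_or_lt_of_le hEn1 with hEq | hLt
              · rw [nxt, if_neg (by omega)]
                omega
              · have hPE := subEnd_P_anc H1 H2 hi (by omega)
                have hle := anc_le H1 hPE.1
                rw [nxt, if_pos (by omega), show subEnd P n i - 1 + 1 = subEnd P n i by omega]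
                have := hPE.2
                omega
            rw [if_neg (by omega), cch_cons H1 hi hKle, if_neg (by omega)]
            simp [cl]
        rw [hkey]
        simp
    refine ⟨hmain, ?_⟩
    intro F hi1 hF p hPi hpi
    have hcc : i ∈ childList P n p := mem_childList.mpr ⟨hi, hi1, hPi, hpi⟩
    have hanc : Anc P n p i := child_anc hi1 hi hPi
    have hpn : p ≤ n := by omega
    have hiE : i < subEnd P n p := ((mem_iff H1 H2 hpn hi).mp hanc).2
    have hEc_le : subEnd P n i ≤ subEnd P n p := by
      by_contra hcon
      push_neg at hcon
      have hEpn : subEnd P n p ≤ n := by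
        have := subEnd_le (P := P) (n := n) (i := i) hi
        omega
      have hx1 : Anc P n i (subEnd P n p) := (mem_iff H1 H2 hi hEpn).mpr ⟨by omega, hcon⟩
      have hx2 : Anc P n p (subEnd P n p) := anc_trans hanc hx1
      exact (subEnd_spec P n p).2 ⟨hEpn, hx2⟩
    have hM := hmain F hF
    rw [if_neg (by omega), hPi] at hM
    rcases eq_or_lt_of_le hEc_le with hEq | hLt
    · -- last child
      have hfilter : (childList P n p).filter (fun d => decide (i ≤ d)) = [i] := by
        apply filter_single childList_nodup hcc (by simp)
        intro q hq hqe
        simp at hqe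
        obtain ⟨hqn, hq1, hPq, hpq⟩ := mem_childList.mp hq
        by_contra hne
        have hqi : i < q := by omega
        have hAnc_iq : Anc P n i q := (mem_iff H1 H2 hi hqn).mpr ⟨by omega, by
          have hqE : q < subEnd P n p := ((mem_iff H1 H2 hpn hqn).mp (child_anc hq1 hqn hPq)).2
          omega⟩
        cases hAnc_iq with
        | refl => omega
        | step hj hjn h' =>
          rw [hPq] at h'
          have := anc_le H1 h'
          omega
      rw [hfilter, ← hEq, hM]
      simp
    · -- middle child
      have hen : subEnd P n i ≤ n := by
        have := subEnd_le (P := P) (n := n) (i := p) hpn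
        omega
      have hie : i < subEnd P n i := (subEnd_spec P n i).1
      have hPe := subEnd_P_anc H1 H2 hi hen
      have hPep : P (subEnd P n i) = p := by
        have hx1 : P (subEnd P n i) ≤ p := by
          rcases anc_cases hPe.1 with hc | ⟨_, _, h'⟩
          · exact absurd hc hPe.2
          · rw [hPi] at h'
            exact anc_le H1 h'
        have hx2 : p ≤ P (subEnd P n i) := by
          have hanc_pe : Anc P n p (subEnd P n i) :=
            (mem_iff H1 H2 hpn hen).mpr ⟨by omega, hLt⟩
          rcases anc_cases hanc_pe with hc | ⟨_, _, h'⟩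
          · omega
          · exact anc_le H1 h'
        omega
      have hW' := (ih (subEnd P n i) hen (by omega)).2 F (by omega) (by omega) p hPep (by omega)
      have hsplit : segcat P n i (subEnd P n p)
          = segcat P n i (subEnd P n i) ++ segcat P n (subEnd P n i) (subEnd P n p) :=
        (segcat_append (by omega) (by omega)).symm
      have hnxt_e : nxt P n (subEnd P n i - 1) = p + 1 := by
        rw [nxt, if_pos (by omega), show subEnd P n i - 1 + 1 = subEnd P n i by omega, hPep]
      rw [hnxt_e, cch_nil (by omega)] at hM
      have hfil : (childList P n p).filter (fun d => decide (i ≤ d))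
          = i :: (childList P n p).filter (fun d => decide (subEnd P n i ≤ d)) := by
        apply filter_split childList_sorted hcc hie
        intro q hq hiq
        obtain ⟨hqn, hq1, hPq, hpq⟩ := mem_childList.mp hq
        by_contra hqe
        push_neg at hqe
        have hAnc_iq : Anc P n i q := (mem_iff H1 H2 hi hqn).mpr ⟨by omega, by omega⟩
        cases hAnc_iq with
        | refl => omega
        | step _ _ h' =>
          rw [hPq] at h'
          have := anc_le H1 h'
          omega
      rw [hsplit, hM, hW', hfil]
      simp

end Main

section Fpos

variable {P : ℕ → ℕ} {n : ℕ}
variable (H1 : ∀ j, 1 ≤ j → j ≤ n → P j < j)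
variable (H2 : ∀ j, j + 1 ≤ n → Anc P n (P (j+1)) j)

include H1 H2 in
lemma bpt_eq_segcat : bpt (buildTree P n (n+1) 0) = segcat P n 0 (n+1) := by
  have h := (main_ind H1 H2 (n+1) 0 (by omega) (by omega)).1 (n+1) (by omega)
  rw [if_pos rfl, subEnd_zero H1] at h
  simpa using h.symm

lemma indexOf_append_left {α : Type*} [BEq α] [LawfulBEq α] (A B : List α) (x : α)
    (h : x ∉ A) : (A ++ B).idxOf x = A.length + B.idxOf x := by
  induction A with
  | nil => simp
  | cons a t ih =>
    simp only [List.mem_cons, not_or] at h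
    have hne : (a == x) = false := beq_eq_false_iff_ne.mpr (Ne.symm h.1)
    rw [List.cons_append, List.idxOf_cons, hne, ih h.2]
    simp [Nat.succ_eq_add_one]
    omega

lemma indexOf_cons_self' {α : Type*} [BEq α] [LawfulBEq α] (x : α) (l : List α) :
    (x :: l).idxOf x = 0 := by
  rw [List.idxOf_cons]
  simp

include H1 H2 in
lemma fpos_eq {m : ℕ} (hm : m ≤ n) :
    fpos (buildTree P n (n+1) 0) m = (segcat P n 0 m).length + 1 := by
  rw [fpos, bpt_eq_segcat H1 H2,
    ← segcat_append (show (0:ℕ) ≤ m by omega) (show m ≤ n + 1 by omega),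
    segcat_cons (show m < n + 1 by omega)]
  have hnm : (false, m) ∉ segcat P n 0 m := by
    intro hx
    rcases mem_segcat hx with hb | hb
    · simp at hb
    · simp at hb
  have hidx := indexOf_append_left (segcat P n 0 m)
    (seg P n m ++ segcat P n (m + 1) (n + 1)) (false, m) hnm
  rw [hidx, seg, List.cons_append, indexOf_cons_self']

include H1 H2 in
lemma fpos_succ {i : ℕ} (hin : i < n) :
    fpos (buildTree P n (n+1) 0) (i+1)
      = fpos (buildTree P n (n+1) 0) i + (seg P n i).length := by
  rw [fpos_eq H1 H2 (show i ≤ n by omega), fpos_eq H1 H2 (show i + 1 ≤ n by omega),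
    ← segcat_append (show (0:ℕ) ≤ i by omega) (show i ≤ i + 1 by omega),
    segcat_cons (show i < i + 1 by omega), segcat_nil (le_refl (i+1))]
  simp [List.length_append]
  omega

lemma seg_len_one {i : ℕ} (hin : i < n) (hP : P (i+1) = i) : (seg P n i).length = 1 := by
  rw [seg, nxt, if_pos hin, hP, cch_nil (by omega)]
  rfl

include H1 in
lemma seg_len_big {i : ℕ} (hin : i < n) (hP : P (i+1) < i) : 2 ≤ (seg P n i).length := by
  rw [seg, nxt, if_pos hin, cch_cons H1 (by omega) (by omega)]
  simp

end Fpos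

section PSV

lemma psv_H1 (A : ℕ → ℤ) (n : ℕ) : ∀ j, 1 ≤ j → j ≤ n → psv A j < j := by
  intro j hj _
  have : psv A j ≤ j - 1 := Nat.findGreatest_le _
  omega

lemma psv_H2 (A : ℕ → ℤ) (n : ℕ) : ∀ j, j + 1 ≤ n → Anc (psv A) n (psv A (j+1)) j := by
  intro j hjn
  have hkj : psv A (j+1) ≤ j := Nat.findGreatest_le _
  rcases Nat.eq_zero_or_pos (psv A (j+1)) with hk0 | hkpos
  · rw [hk0]
    exact anc_zero (psv_H1 A n) j (by omega)
  · have heq : Nat.findGreatest (fun t => A t < A (j+1)) j = psv A (j+1) := rfl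
    have hiff := Nat.findGreatest_eq_iff.mp heq
    have hspec : A (psv A (j+1)) < A (j+1) := hiff.2.1 (by omega)
    have hgreat : ∀ t, psv A (j+1) < t → t ≤ j → ¬ A t < A (j+1) := fun t h1 h2 =>
      hiff.2.2 h1 h2
    have main : ∀ m, psv A (j+1) ≤ m → m ≤ j → Anc (psv A) n (psv A (j+1)) m := by
      intro m
      induction m using Nat.strong_induction_on with
      | _ m ihm =>
        intro hm1 hm2
        rcases eq_or_lt_of_le hm1 with heq2 | hlt
        · rw [← heq2]
          exact Anc.refl _
        · have hAm : A (j+1) ≤ A m := not_lt.mp (hgreat m hlt hm2)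
          have hAkm : A (psv A (j+1)) < A m := lt_of_lt_of_le hspec hAm
          have hge : psv A (j+1) ≤ psv A m :=
            Nat.le_findGreatest (by omega) hAkm
          have hlt2 : psv A m < m := psv_H1 A n m (by omega) (by omega)
          exact Anc.step (by omega) (by omega) (ihm (psv A m) hlt2 hge (by omega))
    exact main j hkj le_rfl

lemma plv_eq_psv (A : ℕ → ℤ) : plv A = psv (fun x => -(A x)) := by
  funext i
  simp [psv, plv]

lemma plv_H1 (A : ℕ → ℤ) (n : ℕ) : ∀ j, 1 ≤ j → j ≤ n → plv A j < j := by
  rw [plv_eq_psv]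
  exact psv_H1 _ n

lemma plv_H2 (A : ℕ → ℤ) (n : ℕ) : ∀ j, j + 1 ≤ n → Anc (plv A) n (plv A (j+1)) j := by
  rw [plv_eq_psv]
  exact psv_H2 _ n

end PSV

section Values

lemma psv_eq_of_lt {A : ℕ → ℤ} {i : ℕ} (h : A i < A (i+1)) : psv A (i+1) = i := by
  have hle : psv A (i+1) ≤ i := Nat.findGreatest_le _
  have hge : i ≤ psv A (i+1) := Nat.le_findGreatest le_rfl h
  omega

lemma plv_eq_of_gt {A : ℕ → ℤ} {i : ℕ} (h : A (i+1) < A i) : plv A (i+1) = i := by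
  have hle : plv A (i+1) ≤ i := Nat.findGreatest_le _
  have hge : i ≤ plv A (i+1) := Nat.le_findGreatest le_rfl h
  omega

lemma psv_lt_of_gt {A : ℕ → ℤ} {i : ℕ} (hi : 1 ≤ i) (h : A (i+1) < A i) :
    psv A (i+1) < i := by
  have hle : psv A (i+1) ≤ i := Nat.findGreatest_le _
  rcases eq_or_lt_of_le hle with he | hl
  · exfalso
    have he' : Nat.findGreatest (fun t => A t < A (i+1)) ((i+1)-1) = i := he
    have := (Nat.findGreatest_eq_iff.mp he').2.1 (by omega)
    omega
  · exact hl

lemma plv_lt_of_lt {A : ℕ → ℤ} {i : ℕ} (hi : 1 ≤ i) (h : A i < A (i+1)) :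
    plv A (i+1) < i := by
  have hle : plv A (i+1) ≤ i := Nat.findGreatest_le _
  rcases eq_or_lt_of_le hle with he | hl
  · exfalso
    have he' : Nat.findGreatest (fun t => A (i+1) < A t) ((i+1)-1) = i := he
    have := (Nat.findGreatest_eq_iff.mp he').2.1 (by omega)
    omega
  · exact hl

lemma internalMin_iff {A : ℕ → ℤ} {n i : ℕ} (h1 : 1 ≤ i) (h2 : i < n) :
    internalMin A n i ↔ A i < A (i+1) := by
  constructor
  · rintro ⟨j, hj1, hjn, hPj⟩
    have hPj' : Nat.findGreatest (fun t => A t < A j) (j-1) = i := hPj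
    have hiff := Nat.findGreatest_eq_iff.mp hPj'
    have hij : i ≤ j - 1 := hiff.1
    have hAj : A i < A j := hiff.2.1 (by omega)
    rcases eq_or_lt_of_le (show i + 1 ≤ j by omega) with he | hl
    · rwa [← he] at hAj
    · have hng := hiff.2.2 (show i < i+1 by omega) (show i+1 ≤ j-1 by omega)
      simp only [not_lt] at hng
      omega
  · intro hA
    exact ⟨i+1, by omega, by omega, psv_eq_of_lt hA⟩

end Values

end Stmt5Aux



theorem stmt5 (A : ℕ → ℤ) (n : ℕ) (h : NoConsecEq A n) (i : ℕ)
    (h1 : 1 ≤ i) (h2 : i < n) :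
    (internalMin A n i →
      fpos (minTree A n) (i + 1) = fpos (minTree A n) i + 1 ∧
      ∃ k, 1 < k ∧ fpos (maxTree A n) (i + 1) = fpos (maxTree A n) i + k) ∧
    (¬ internalMin A n i →
      fpos (maxTree A n) (i + 1) = fpos (maxTree A n) i + 1 ∧
      ∃ k, 1 < k ∧ fpos (minTree A n) (i + 1) = fpos (minTree A n) i + k) := by
  simp only [minTree, maxTree]
  have hAne : A i ≠ A (i + 1) := h i h1 h2
  have H1m := Stmt5Aux.psv_H1 A n
  have H2m := Stmt5Aux.psv_H2 A n
  have H1x := Stmt5Aux.plv_H1 A n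
  have H2x := Stmt5Aux.plv_H2 A n
  constructor
  · intro hint
    have hA : A i < A (i + 1) := (Stmt5Aux.internalMin_iff h1 h2).mp hint
    have hmin : psv A (i + 1) = i := Stmt5Aux.psv_eq_of_lt hA
    have hmax : plv A (i + 1) < i := Stmt5Aux.plv_lt_of_lt h1 hA
    constructor
    · rw [Stmt5Aux.fpos_succ H1m H2m h2, Stmt5Aux.seg_len_one h2 hmin]
    · refine ⟨(Stmt5Aux.seg (plv A) n i).length, ?_, ?_⟩
      · have := Stmt5Aux.seg_len_big H1x h2 hmax
        omega
      · exact Stmt5Aux.fpos_succ H1x H2x h2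
  · intro hnint
    have hA : A (i + 1) < A i := by
      have hnlt : ¬ A i < A (i + 1) := fun hc =>
        hnint ((Stmt5Aux.internalMin_iff h1 h2).mpr hc)
      omega
    have hmax : plv A (i + 1) = i := Stmt5Aux.plv_eq_of_gt hA
    have hmin : psv A (i + 1) < i := Stmt5Aux.psv_lt_of_gt h1 hA
    constructor
    · rw [Stmt5Aux.fpos_succ H1x H2x h2, Stmt5Aux.seg_len_one h2 hmax]
    · refine ⟨(Stmt5Aux.seg (psv A) n i).length, ?_, ?_⟩
      · have := Stmt5Aux.seg_len_big H1m h2 hmin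
        omega
      · exact Stmt5Aux.fpos_succ H1m H2m h2
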